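/- arXiv:2208.12009 — 6 statements merged into one kernel-verified Lean document; each statement's English description precedes it below -/
import Mathlib

section
/- Let 𝔤 be a finite-dimensional real Lie algebra, U ⊆ ℝ³ open, and let A : U → (Fin 3 → 𝔤) and q : U → 𝔤 be continuously differentiable. Set B := curl A + (1/2) • ⋆[A,A]. Then on U: curl([A,q]) + ⋆[A, grad q + [A,q]] = [B, q]. -/
open scoped BigOperators

/-- The Levi-Civita symbol on three indices (totally antisymmetric, `ε 0 1 2 = 1`). -/
noncomputable def levicivita (i j k : Fin 3) : ℝ :=
  (((j : ℕ) : ℝ) - ((i : ℕ) : ℝ)) * (((k : ℕ) : ℝ) - ((j : ℕ) : ℝ)) *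
    (((k : ℕ) : ℝ) - ((i : ℕ) : ℝ)) / 2

/-- The partial derivative `∂_μ f` on `ℝ³`. -/
noncomputable def pderiv3 {E : Type*} [NormedAddCommGroup E] [NormedSpace ℝ E]
    (μ : Fin 3) (f : EuclideanSpace ℝ (Fin 3) → E) (x : EuclideanSpace ℝ (Fin 3)) : E :=
  fderiv ℝ f x (EuclideanSpace.single μ 1)

/-- The gradient of a `𝔤`-valued function on `ℝ³`. -/
noncomputable def grad3 {𝔤 : Type*} [NormedAddCommGroup 𝔤] [NormedSpace ℝ 𝔤]
    (q : EuclideanSpace ℝ (Fin 3) → 𝔤) (x : EuclideanSpace ℝ (Fin 3)) : Fin 3 → 𝔤 :=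
  fun μ => pderiv3 μ q x

/-- The curl of a `𝔤`-valued vector field on `ℝ³`:
`(curl A)(α) = Σ_{μ,ν} ε(α,μ,ν) • ∂_μ A(ν)`. -/
noncomputable def curl3 {𝔤 : Type*} [NormedAddCommGroup 𝔤] [NormedSpace ℝ 𝔤]
    (A : EuclideanSpace ℝ (Fin 3) → Fin 3 → 𝔤) (x : EuclideanSpace ℝ (Fin 3)) :
    Fin 3 → 𝔤 :=
  fun α => ∑ μ : Fin 3, ∑ ν : Fin 3, levicivita α μ ν • pderiv3 μ (fun y => A y ν) x

/-- The divergence of a `𝔤`-valued vector field on `ℝ³`: `div A = Σ_μ ∂_μ A(μ)`. -/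
noncomputable def div3 {𝔤 : Type*} [NormedAddCommGroup 𝔤] [NormedSpace ℝ 𝔤]
    (A : EuclideanSpace ℝ (Fin 3) → Fin 3 → 𝔤) (x : EuclideanSpace ℝ (Fin 3)) : 𝔤 :=
  ∑ μ : Fin 3, pderiv3 μ (fun y => A y μ) x

/-- The cross-bracket `⋆[v,w](α) = Σ_{μ,ν} ε(α,μ,ν) • ⁅v(μ), w(ν)⁆`, where the Lie
bracket of `𝔤` is the continuous bilinear map `br`. -/
noncomputable def crossBr {𝔤 : Type*} [NormedAddCommGroup 𝔤] [NormedSpace ℝ 𝔤]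
    (br : 𝔤 →L[ℝ] 𝔤 →L[ℝ] 𝔤) (v w : Fin 3 → 𝔤) : Fin 3 → 𝔤 :=
  fun α => ∑ μ : Fin 3, ∑ ν : Fin 3, levicivita α μ ν • br (v μ) (w ν)

/-- The dot-bracket `⋆[v,⋆w] = Σ_α ⁅v(α), w(α)⁆`, where the Lie bracket of `𝔤` is the
continuous bilinear map `br`. -/
noncomputable def dotBr {𝔤 : Type*} [NormedAddCommGroup 𝔤] [NormedSpace ℝ 𝔤]
    (br : 𝔤 →L[ℝ] 𝔤 →L[ℝ] 𝔤) (v w : Fin 3 → 𝔤) : 𝔤 :=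
  ∑ α : Fin 3, br (v α) (w α)

lemma pderiv3_br' {𝔤 : Type*} [NormedAddCommGroup 𝔤] [NormedSpace ℝ 𝔤]
    (br : 𝔤 →L[ℝ] 𝔤 →L[ℝ] 𝔤) (f g : EuclideanSpace ℝ (Fin 3) → 𝔤)
    (x : EuclideanSpace ℝ (Fin 3)) (hf : DifferentiableAt ℝ f x)
    (hg : DifferentiableAt ℝ g x) (μ : Fin 3) :
    pderiv3 μ (fun y => br (f y) (g y)) x
      = br (pderiv3 μ f x) (g x) + br (f x) (pderiv3 μ g x) := by
  have h := (br.isBoundedBilinearMap.hasFDerivAt (f x, g x)).comp x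
    (HasFDerivAt.prodMk hf.hasFDerivAt hg.hasFDerivAt)
  have h2 : HasFDerivAt (fun y => br (f y) (g y)) _ x := h
  rw [pderiv3, h2.fderiv]
  simp [IsBoundedBilinearMap.deriv_apply, pderiv3, add_comm]

/-- setting `B := curl A + (1/2) • ⋆[A,A]`, one has
`curl([A,q]) + ⋆[A, grad q + [A,q]] = [B, q]` on `U`. -/
theorem curl_bracket_add_cross {𝔤 : Type*} [NormedAddCommGroup 𝔤] [NormedSpace ℝ 𝔤]
    [FiniteDimensional ℝ 𝔤]
    (br : 𝔤 →L[ℝ] 𝔤 →L[ℝ] 𝔤)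
    (br_alt : ∀ a : 𝔤, br a a = 0)
    (br_jacobi : ∀ a b c : 𝔤, br a (br b c) + br b (br c a) + br c (br a b) = 0)
    (U : Set (EuclideanSpace ℝ (Fin 3))) (hU : IsOpen U)
    (A : EuclideanSpace ℝ (Fin 3) → Fin 3 → 𝔤) (q : EuclideanSpace ℝ (Fin 3) → 𝔤)
    (hA : ContDiffOn ℝ 1 A U) (hq : ContDiffOn ℝ 1 q U)
    (B : EuclideanSpace ℝ (Fin 3) → Fin 3 → 𝔤)
    (hB : B = fun y α => curl3 A y α + (1/2 : ℝ) • crossBr br (A y) (A y) α) :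
    ∀ x ∈ U, ∀ α : Fin 3,
      curl3 (fun y β => br (A y β) (q y)) x α
          + crossBr br (A x) (fun μ => grad3 q x μ + br (A x μ) (q x)) α
        = br (B x α) (q x) :=  by
  have anti : ∀ a b : 𝔤, br b a = - br a b := by
    intro a b
    have h : br b a + br a b = 0 := by
      have h0 := br_alt (a + b)
      simpa [map_add, ContinuousLinearMap.add_apply, br_alt] using h0
    exact eq_neg_of_add_eq_zero_left h
  have der : ∀ a b c : 𝔤, br (br a b) c = br a (br b c) - br b (br a c) := by
    intro a b c
    have h := br_jacobi a b c
    rw [anti a c, map_neg, anti (br a b) c] at h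
    have h3 : br a (br b c) - br b (br a c) - br (br a b) c = 0 := by
      rw [← h]; abel
    exact (sub_eq_zero.mp h3).symm
  intro x hx α
  have hx' : U ∈ nhds x := hU.mem_nhds hx
  have hA' : DifferentiableAt ℝ A x :=
    ((hA.differentiableOn one_ne_zero) x hx).differentiableAt hx'
  have hq' : DifferentiableAt ℝ q x :=
    ((hq.differentiableOn one_ne_zero) x hx).differentiableAt hx'
  have hAc : ∀ ν : Fin 3, DifferentiableAt ℝ (fun y => A y ν) x :=
    fun ν => differentiableAt_pi.1 hA' ν
  have key : ∀ μ ν : Fin 3, pderiv3 μ (fun y => br (A y ν) (q y)) x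
      = br (pderiv3 μ (fun y => A y ν) x) (q x) + br (A x ν) (pderiv3 μ q x) :=
    fun μ ν => pderiv3_br' br _ _ _ (hAc ν) hq' μ
  subst hB
  fin_cases α <;>
  · simp only [curl3, crossBr, grad3, Fin.sum_univ_three]
    norm_num [levicivita]
    simp only [key, der, map_add, map_sub, map_neg, map_smul,
      ContinuousLinearMap.add_apply, ContinuousLinearMap.sub_apply,
      ContinuousLinearMap.neg_apply, ContinuousLinearMap.smul_apply]
    module
end

section
/- Let 𝔤 be a finite-dimensional real Lie algebra, U ⊆ ℝ³ open, and let A : U → (Fin 3 → 𝔤) be three times continuously differentiable. Set B := curl A + (1/2) • ⋆[A,A]. Then the Yang–Mills (Bianchi-type) identity div(curl B + ⋆[A,B]) + ⋆[A, ⋆(curl B + ⋆[A,B])] = 0 holds on U. -/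
open scoped BigOperators

section Helpers

variable {𝔤 : Type*} [NormedAddCommGroup 𝔤] [NormedSpace ℝ 𝔤]

lemma eps_sum (f : Fin 3 → Fin 3 → Fin 3 → 𝔤) :
    (∑ α : Fin 3, ∑ μ : Fin 3, ∑ ν : Fin 3, levicivita α μ ν • f α μ ν)
      = f 0 1 2 + f 1 2 0 + f 2 0 1 - f 0 2 1 - f 1 0 2 - f 2 1 0 := by
  simp only [Fin.sum_univ_three, levicivita, Fin.val_zero, Fin.val_one, Fin.val_two,
    Fin.isValue]
  norm_num
  abel

lemma eps_sym_zero (f : Fin 3 → Fin 3 → Fin 3 → 𝔤) (h : ∀ α μ ν, f α μ ν = f μ α ν) :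
    (∑ α : Fin 3, ∑ μ : Fin 3, ∑ ν : Fin 3, levicivita α μ ν • f α μ ν) = 0 := by
  rw [eps_sum, h 1 0 2, h 2 0 1, h 2 1 0]
  abel

lemma eps_swap_zero (f : Fin 3 → Fin 3 → Fin 3 → 𝔤) :
    (∑ α : Fin 3, ∑ μ : Fin 3, ∑ ν : Fin 3, levicivita α μ ν • f α μ ν)
      + (∑ α : Fin 3, ∑ μ : Fin 3, ∑ ν : Fin 3, levicivita α μ ν • f μ α ν) = 0 := by
  rw [eps_sum, eps_sum (fun α μ ν => f μ α ν)]
  abel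

lemma br_anti (br : 𝔤 →L[ℝ] 𝔤 →L[ℝ] 𝔤) (br_alt : ∀ a : 𝔤, br a a = 0) (u v : 𝔤) :
    br u v = - br v u := by
  have h := br_alt (u + v)
  simp only [map_add, ContinuousLinearMap.add_apply, br_alt] at h
  linear_combination (norm := module) h

lemma br_leib (br : 𝔤 →L[ℝ] 𝔤 →L[ℝ] 𝔤) (br_alt : ∀ a : 𝔤, br a a = 0)
    (br_jacobi : ∀ a b c : 𝔤, br a (br b c) + br b (br c a) + br c (br a b) = 0)
    (u v w : 𝔤) : br u (br v w) - br v (br u w) + br w (br u v) = 0 := by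
  have h := br_jacobi u v w
  rw [br_anti br br_alt w u, map_neg] at h
  linear_combination (norm := module) h

lemma alg (br : 𝔤 →L[ℝ] 𝔤 →L[ℝ] 𝔤) (br_alt : ∀ a : 𝔤, br a a = 0)
    (br_jacobi : ∀ a b c : 𝔤, br a (br b c) + br b (br c a) + br c (br a b) = 0)
    (a c b : Fin 3 → 𝔤)
    (hb : ∀ ν, b ν = c ν + (1/2 : ℝ) • crossBr br a a ν) :
    (∑ ν : Fin 3, br (c ν) (b ν))
      + (∑ α : Fin 3, ∑ μ : Fin 3, ∑ ν : Fin 3,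
          levicivita α μ ν • br (a α) (br (a μ) (b ν))) = 0 := by
  have hb0 : b 0 = c 0 + br (a 1) (a 2) := by
    rw [hb 0]
    simp only [crossBr, Fin.sum_univ_three, levicivita, Fin.val_zero, Fin.val_one, Fin.val_two,
      Fin.isValue]
    norm_num
    rw [br_anti br br_alt (a 2) (a 1)]
    module
  have hb1 : b 1 = c 1 + br (a 2) (a 0) := by
    rw [hb 1]
    simp only [crossBr, Fin.sum_univ_three, levicivita, Fin.val_zero, Fin.val_one, Fin.val_two,
      Fin.isValue]
    norm_num
    rw [br_anti br br_alt (a 0) (a 2)]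
    module
  have hb2 : b 2 = c 2 + br (a 0) (a 1) := by
    rw [hb 2]
    simp only [crossBr, Fin.sum_univ_three, levicivita, Fin.val_zero, Fin.val_one, Fin.val_two,
      Fin.isValue]
    norm_num
    rw [br_anti br br_alt (a 1) (a 0)]
    module
  rw [eps_sum (fun α μ ν => br (a α) (br (a μ) (b ν))), Fin.sum_univ_three]
  rw [hb0, hb1, hb2]
  simp only [map_add, br_alt, zero_add]
  linear_combination (norm := module) br_leib br br_alt br_jacobi (a 0) (a 1) (c 2)
    + br_leib br br_alt br_jacobi (a 1) (a 2) (c 0)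
    + br_leib br br_alt br_jacobi (a 2) (a 0) (c 1)
    + br_leib br br_alt br_jacobi (a 0) (a 1) (br (a 0) (a 1))
    + br_leib br br_alt br_jacobi (a 1) (a 2) (br (a 1) (a 2))
    + br_leib br br_alt br_jacobi (a 2) (a 0) (br (a 2) (a 0))
    - br_alt (br (a 0) (a 1)) - br_alt (br (a 1) (a 2)) - br_alt (br (a 2) (a 0))

end Helpers

/-- with `B := curl A + (1/2) • ⋆[A,A]`, the Yang–Mills (Bianchi-type)
identity `div(curl B + ⋆[A,B]) + ⋆[A, ⋆(curl B + ⋆[A,B])] = 0` holds on `U`. -/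
theorem yangMills_bianchi {𝔤 : Type*} [NormedAddCommGroup 𝔤] [NormedSpace ℝ 𝔤]
    [FiniteDimensional ℝ 𝔤]
    (br : 𝔤 →L[ℝ] 𝔤 →L[ℝ] 𝔤)
    (br_alt : ∀ a : 𝔤, br a a = 0)
    (br_jacobi : ∀ a b c : 𝔤, br a (br b c) + br b (br c a) + br c (br a b) = 0)
    (U : Set (EuclideanSpace ℝ (Fin 3))) (hU : IsOpen U)
    (A : EuclideanSpace ℝ (Fin 3) → Fin 3 → 𝔤)
    (hA : ContDiffOn ℝ 3 A U)
    (B J : EuclideanSpace ℝ (Fin 3) → Fin 3 → 𝔤)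
    (hB : B = fun y α => curl3 A y α + (1/2 : ℝ) • crossBr br (A y) (A y) α)
    (hJ : J = fun y α => curl3 B y α + crossBr br (A y) (B y) α) :
    ∀ x ∈ U, div3 J x + dotBr br (A x) (J x) = 0 := by
  intro x hx
  have hmem : U ∈ nhds x := hU.mem_nhds hx
  -- component smoothness of A
  have hAν : ∀ ν : Fin 3, ContDiffOn ℝ 3 (fun y => A y ν) U := fun ν => contDiffOn_pi.mp hA ν
  have hdAν : ∀ μ ν : Fin 3, ContDiffOn ℝ 2
      (fun y => fderiv ℝ (fun z => A z ν) y (EuclideanSpace.single μ 1)) U := by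
    intro μ ν
    exact ((hAν ν).fderiv_of_isOpen hU (by norm_num)).clm_apply contDiffOn_const
  -- component smoothness of B
  have hBν : ∀ ν : Fin 3, ContDiffOn ℝ 2 (fun y => B y ν) U := by
    intro ν
    rw [hB]
    simp only [curl3, crossBr, pderiv3]
    apply ContDiffOn.add
    · exact ContDiffOn.sum fun μ' _ => ContDiffOn.sum fun ν' _ => (hdAν μ' ν').const_smul _
    · apply ContDiffOn.const_smul
      refine ContDiffOn.sum fun μ' _ => ContDiffOn.sum fun ν' _ => ContDiffOn.const_smul _ ?_
      exact (br.contDiff.comp_contDiffOn ((hAν μ').of_le (by norm_num))).clm_apply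
        ((hAν ν').of_le (by norm_num))
  -- pointwise facts at x
  have hBx : ∀ ν : Fin 3, ContDiffAt ℝ 2 (fun y => B y ν) x := fun ν => (hBν ν).contDiffAt hmem
  have hdBx : ∀ ν : Fin 3, DifferentiableAt ℝ (fun y => B y ν) x :=
    fun ν => (hBx ν).differentiableAt two_ne_zero
  have hfdBx : ∀ ν : Fin 3, DifferentiableAt ℝ (fderiv ℝ (fun y => B y ν)) x :=
    fun ν => ((hBx ν).fderiv_right le_rfl).differentiableAt one_ne_zero
  have hdAx : ∀ ν : Fin 3, DifferentiableAt ℝ (fun y => A y ν) x :=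
    fun ν => ((hAν ν).contDiffAt hmem).differentiableAt (by norm_num)
  have hP : ∀ μ ν : Fin 3, DifferentiableAt ℝ
      (fun y => fderiv ℝ (fun z => B z ν) y (EuclideanSpace.single μ 1)) x :=
    fun μ ν => (hfdBx ν).clm_apply (differentiableAt_const _)
  have hbrA : ∀ μ : Fin 3, DifferentiableAt ℝ (fun y => br (A y μ)) x := fun μ =>
    br.differentiableAt.comp x (hdAx μ)
  have hK : ∀ μ ν : Fin 3, DifferentiableAt ℝ (fun y => br (A y μ) (B y ν)) x :=
    fun μ ν => (hbrA μ).clm_apply (hdBx ν)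
  -- derivative formulas at x
  have hderiv1 : ∀ α μ ν : Fin 3,
      fderiv ℝ (fun y => fderiv ℝ (fun z => B z ν) y (EuclideanSpace.single μ 1)) x
          (EuclideanSpace.single α 1)
        = fderiv ℝ (fderiv ℝ (fun z => B z ν)) x (EuclideanSpace.single α 1)
            (EuclideanSpace.single μ 1) := by
    intro α μ ν
    rw [fderiv_clm_apply (hfdBx ν) (differentiableAt_const _)]
    simp
  have hfdbr : ∀ μ : Fin 3, fderiv ℝ (fun y => br (A y μ)) x
      = br.comp (fderiv ℝ (fun y => A y μ) x) := by
    intro μ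
    exact (br.hasFDerivAt.comp x (hdAx μ).hasFDerivAt).fderiv
  have hderiv2 : ∀ α μ ν : Fin 3,
      fderiv ℝ (fun y => br (A y μ) (B y ν)) x (EuclideanSpace.single α 1)
        = br (fderiv ℝ (fun y => A y μ) x (EuclideanSpace.single α 1)) (B x ν)
          + br (A x μ) (fderiv ℝ (fun y => B y ν) x (EuclideanSpace.single α 1)) := by
    intro α μ ν
    rw [fderiv_clm_apply (hbrA μ) (hdBx ν), hfdbr μ]
    simp only [ContinuousLinearMap.add_apply, ContinuousLinearMap.coe_comp', Function.comp_apply,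
      ContinuousLinearMap.flip_apply, ContinuousLinearMap.comp_apply]
    abel
  -- generic double-sum derivative
  have fd2 : ∀ (F : Fin 3 → Fin 3 → EuclideanSpace ℝ (Fin 3) → 𝔤)
      (v : EuclideanSpace ℝ (Fin 3)), (∀ μ ν, DifferentiableAt ℝ (F μ ν) x) →
      fderiv ℝ (fun y => ∑ μ : Fin 3, ∑ ν : Fin 3, F μ ν y) x v
        = ∑ μ : Fin 3, ∑ ν : Fin 3, fderiv ℝ (F μ ν) x v := by
    intro F v hF
    rw [fderiv_fun_sum (fun μ _ => DifferentiableAt.fun_sum (fun ν _ => hF μ ν))]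
    rw [ContinuousLinearMap.sum_apply]
    refine Finset.sum_congr rfl fun μ _ => ?_
    rw [fderiv_fun_sum (fun ν _ => hF μ ν), ContinuousLinearMap.sum_apply]
  -- expansion of div3 J x
  have hdiv : div3 J x =
      (∑ α : Fin 3, ∑ μ : Fin 3, ∑ ν : Fin 3, levicivita α μ ν •
          fderiv ℝ (fderiv ℝ (fun z => B z ν)) x (EuclideanSpace.single α 1)
            (EuclideanSpace.single μ 1))
      + ((∑ α : Fin 3, ∑ μ : Fin 3, ∑ ν : Fin 3, levicivita α μ ν •
            br (fderiv ℝ (fun y => A y μ) x (EuclideanSpace.single α 1)) (B x ν))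
        + (∑ α : Fin 3, ∑ μ : Fin 3, ∑ ν : Fin 3, levicivita α μ ν •
            br (A x μ) (fderiv ℝ (fun z => B z ν) x (EuclideanSpace.single α 1)))) := by
    have hα : ∀ α : Fin 3, pderiv3 α (fun y => J y α) x
        = (∑ μ : Fin 3, ∑ ν : Fin 3, levicivita α μ ν •
            fderiv ℝ (fderiv ℝ (fun z => B z ν)) x (EuclideanSpace.single α 1)
              (EuclideanSpace.single μ 1))
          + ((∑ μ : Fin 3, ∑ ν : Fin 3, levicivita α μ ν •
              br (fderiv ℝ (fun y => A y μ) x (EuclideanSpace.single α 1)) (B x ν))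
            + (∑ μ : Fin 3, ∑ ν : Fin 3, levicivita α μ ν •
              br (A x μ) (fderiv ℝ (fun z => B z ν) x (EuclideanSpace.single α 1)))) := by
      intro α
      have hfun : (fun y => J y α) = fun y =>
          (∑ μ : Fin 3, ∑ ν : Fin 3, levicivita α μ ν •
            fderiv ℝ (fun z => B z ν) y (EuclideanSpace.single μ 1))
          + ∑ μ : Fin 3, ∑ ν : Fin 3, levicivita α μ ν • br (A y μ) (B y ν) := by
        funext y
        rw [hJ]
        rfl
      have h1 : DifferentiableAt ℝ (fun y => ∑ μ : Fin 3, ∑ ν : Fin 3, levicivita α μ ν •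
          fderiv ℝ (fun z => B z ν) y (EuclideanSpace.single μ 1)) x :=
        DifferentiableAt.fun_sum fun μ _ => DifferentiableAt.fun_sum fun ν _ => (hP μ ν).const_smul _
      have h2 : DifferentiableAt ℝ (fun y => ∑ μ : Fin 3, ∑ ν : Fin 3, levicivita α μ ν •
          br (A y μ) (B y ν)) x :=
        DifferentiableAt.fun_sum fun μ _ => DifferentiableAt.fun_sum fun ν _ => (hK μ ν).const_smul _
      show fderiv ℝ (fun y => J y α) x (EuclideanSpace.single α 1) = _
      rw [hfun, fderiv_fun_add h1 h2, ContinuousLinearMap.add_apply]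
      congr 1
      · rw [fd2 _ _ (fun μ ν => (hP μ ν).fun_const_smul _)]
        refine Finset.sum_congr rfl fun μ _ => Finset.sum_congr rfl fun ν _ => ?_
        rw [fderiv_fun_const_smul (hP μ ν), ContinuousLinearMap.smul_apply, hderiv1]
      · rw [fd2 _ _ (fun μ ν => (hK μ ν).fun_const_smul _), ← Finset.sum_add_distrib]
        refine Finset.sum_congr rfl fun μ _ => ?_
        rw [← Finset.sum_add_distrib]
        refine Finset.sum_congr rfl fun ν _ => ?_
        rw [fderiv_fun_const_smul (hK μ ν), ContinuousLinearMap.smul_apply, hderiv2, smul_add]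
    calc div3 J x = ∑ α : Fin 3, pderiv3 α (fun y => J y α) x := rfl
      _ = _ := by
          rw [Finset.sum_congr rfl fun α _ => hα α, Finset.sum_add_distrib,
            Finset.sum_add_distrib]
  -- expansion of dotBr
  have hdot : dotBr br (A x) (J x) =
      (∑ α : Fin 3, ∑ μ : Fin 3, ∑ ν : Fin 3, levicivita α μ ν •
          br (A x α) (fderiv ℝ (fun z => B z ν) x (EuclideanSpace.single μ 1)))
      + (∑ α : Fin 3, ∑ μ : Fin 3, ∑ ν : Fin 3, levicivita α μ ν •
          br (A x α) (br (A x μ) (B x ν))) := by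
    rw [show dotBr br (A x) (J x) = ∑ α : Fin 3, br (A x α) (J x α) from rfl,
      ← Finset.sum_add_distrib]
    refine Finset.sum_congr rfl fun α _ => ?_
    have hJx : J x α = (∑ μ : Fin 3, ∑ ν : Fin 3, levicivita α μ ν •
          fderiv ℝ (fun z => B z ν) x (EuclideanSpace.single μ 1))
        + ∑ μ : Fin 3, ∑ ν : Fin 3, levicivita α μ ν • br (A x μ) (B x ν) := by
      rw [hJ]
      rfl
    rw [hJx, map_add]
    simp only [map_sum, map_smul]
  rw [hdiv, hdot]
  -- the four pieces
  have hS1 : (∑ α : Fin 3, ∑ μ : Fin 3, ∑ ν : Fin 3, levicivita α μ ν •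
      fderiv ℝ (fderiv ℝ (fun z => B z ν)) x (EuclideanSpace.single α 1)
        (EuclideanSpace.single μ 1)) = 0 :=
    eps_sym_zero _ fun α μ ν => ((hBx ν).isSymmSndFDerivAt (by simp))
      (EuclideanSpace.single α 1) (EuclideanSpace.single μ 1)
  have hswap : (∑ α : Fin 3, ∑ μ : Fin 3, ∑ ν : Fin 3, levicivita α μ ν •
        br (A x α) (fderiv ℝ (fun z => B z ν) x (EuclideanSpace.single μ 1)))
      + (∑ α : Fin 3, ∑ μ : Fin 3, ∑ ν : Fin 3, levicivita α μ ν •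
        br (A x μ) (fderiv ℝ (fun z => B z ν) x (EuclideanSpace.single α 1))) = 0 :=
    eps_swap_zero fun α μ ν =>
      br (A x α) (fderiv ℝ (fun z => B z ν) x (EuclideanSpace.single μ 1))
  have hS2 : (∑ α : Fin 3, ∑ μ : Fin 3, ∑ ν : Fin 3, levicivita α μ ν •
        br (fderiv ℝ (fun y => A y μ) x (EuclideanSpace.single α 1)) (B x ν))
      = ∑ ν : Fin 3, br (curl3 A x ν) (B x ν) := by
    rw [eps_sum (fun α μ ν =>
      br (fderiv ℝ (fun y => A y μ) x (EuclideanSpace.single α 1)) (B x ν)),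
      Fin.sum_univ_three]
    have c0 : curl3 A x 0 = fderiv ℝ (fun y => A y 2) x (EuclideanSpace.single 1 1)
        - fderiv ℝ (fun y => A y 1) x (EuclideanSpace.single 2 1) := by
      simp only [curl3, pderiv3, Fin.sum_univ_three, levicivita, Fin.val_zero, Fin.val_one,
        Fin.val_two, Fin.isValue]
      norm_num
      module
    have c1 : curl3 A x 1 = fderiv ℝ (fun y => A y 0) x (EuclideanSpace.single 2 1)
        - fderiv ℝ (fun y => A y 2) x (EuclideanSpace.single 0 1) := by
      simp only [curl3, pderiv3, Fin.sum_univ_three, levicivita, Fin.val_zero, Fin.val_one,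
        Fin.val_two, Fin.isValue]
      norm_num
      module
    have c2 : curl3 A x 2 = fderiv ℝ (fun y => A y 1) x (EuclideanSpace.single 0 1)
        - fderiv ℝ (fun y => A y 0) x (EuclideanSpace.single 1 1) := by
      simp only [curl3, pderiv3, Fin.sum_univ_three, levicivita, Fin.val_zero, Fin.val_one,
        Fin.val_two, Fin.isValue]
      norm_num
      module
    rw [c0, c1, c2]
    simp only [map_sub, ContinuousLinearMap.sub_apply]
    abel
  have halg := alg br br_alt br_jacobi (A x) (fun ν => curl3 A x ν) (fun ν => B x ν)
    (by intro ν; rw [hB])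
  linear_combination (norm := module) hS1 + hswap + hS2 + halg
end

section
/- Let 𝔤 be a finite-dimensional real Lie algebra equipped with an Ad-invariant inner product ⟨·,·⟩. Let A, E : ℝ × ℝ³ → (Fin 3 → 𝔤) be smooth and satisfy ∂_t A = −E and ∂_t E = curl B + ⋆[A,B] on ℝ × ℝ³, where B(t,·) := curl A(t,·) + (1/2) • ⋆[A(t,·),A(t,·)]. Then for every smooth compactly supported q : ℝ³ → 𝔤, the function t ↦ ∫_{ℝ³} Σ_μ ⟨E(t,x)(μ), (grad q)(x)(μ) + ⁅A(t,x)(μ), q(x)⁆⟩ dx is constant in t. In particular, if this weak constraint vanishes at t = 0 for all such q, it vanishes for all times. -/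
open scoped BigOperators

open MeasureTheory

-- ===== auxiliary machinery =====
section Aux

local notation "E3" => EuclideanSpace ℝ (Fin 3)

lemma lc_swap12 (i j k : Fin 3) : levicivita j i k = -levicivita i j k := by
  fin_cases i <;> fin_cases j <;> fin_cases k <;> norm_num [levicivita]

lemma lc_swap13 (i j k : Fin 3) : levicivita k j i = -levicivita i j k := by
  fin_cases i <;> fin_cases j <;> fin_cases k <;> norm_num [levicivita]

section EpsSum
variable {M : Type*} [AddCommGroup M] [Module ℝ M]

lemma sum_eps_comm (ν : Fin 3) (g : Fin 3 → Fin 3 → M) :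
    (∑ α : Fin 3, ∑ μ : Fin 3, levicivita α μ ν • g α μ)
      = -∑ α : Fin 3, ∑ μ : Fin 3, levicivita α μ ν • g μ α := by
  rw [Finset.sum_comm]
  conv_rhs => rw [← Finset.sum_neg_distrib]
  refine Finset.sum_congr rfl fun x _ => ?_
  conv_rhs => rw [← Finset.sum_neg_distrib]
  refine Finset.sum_congr rfl fun y _ => ?_
  rw [lc_swap12, neg_smul]

lemma sum_eps_antisym (ν : Fin 3) (g : Fin 3 → Fin 3 → M)
    (hsym : ∀ α μ, g α μ = g μ α) :
    (∑ α : Fin 3, ∑ μ : Fin 3, levicivita α μ ν • g α μ) = 0 := by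
  have h := sum_eps_comm ν g
  have h' : (∑ α : Fin 3, ∑ μ : Fin 3, levicivita α μ ν • g μ α)
      = ∑ α : Fin 3, ∑ μ : Fin 3, levicivita α μ ν • g α μ :=
    Finset.sum_congr rfl fun α _ => Finset.sum_congr rfl fun μ _ => by rw [hsym μ α]
  rw [h'] at h
  have h2 : (2:ℝ) • (∑ α : Fin 3, ∑ μ : Fin 3, levicivita α μ ν • g α μ) = 0 := by
    rw [two_smul]
    nth_rewrite 1 [h]
    exact neg_add_cancel _
  exact (smul_eq_zero.mp h2).resolve_left (by norm_num)

end EpsSum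

section Br
variable {𝔤 : Type*} [NormedAddCommGroup 𝔤] [NormedSpace ℝ 𝔤]
  (br : 𝔤 →L[ℝ] 𝔤 →L[ℝ] 𝔤)

lemma br_skew (br_alt : ∀ a : 𝔤, br a a = 0) (u v : 𝔤) : br u v = -br v u := by
  have h := br_alt (u + v)
  simp only [map_add, ContinuousLinearMap.add_apply, br_alt u, br_alt v,
    zero_add, add_zero] at h
  exact eq_neg_of_add_eq_zero_right h

lemma br_leibniz (br_alt : ∀ a : 𝔤, br a a = 0)
    (br_jacobi : ∀ a b c : 𝔤, br a (br b c) + br b (br c a) + br c (br a b) = 0)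
    (u v w : 𝔤) : br (br u v) w = br u (br v w) - br v (br u w) := by
  have hj := br_jacobi u v w
  have h1 : br v (br w u) = - br v (br u w) := by
    rw [br_skew br br_alt w u, map_neg]
  have h2 : br w (br u v) = - br (br u v) w := br_skew br br_alt w (br u v)
  rw [h1, h2, ← sub_eq_add_neg, ← sub_eq_add_neg] at hj
  exact (sub_eq_zero.mp hj).symm

end Br



section
variable {V W X : Type*} [NormedAddCommGroup V] [NormedSpace ℝ V]
  [NormedAddCommGroup W] [NormedSpace ℝ W] [NormedAddCommGroup X] [NormedSpace ℝ X]


lemma HasFDerivAt.pderiv3_eq {f : E3 → V} {f' : E3 →L[ℝ] V} {x : E3}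
    (h : HasFDerivAt f f' x) (μ : Fin 3) :
    pderiv3 μ f x = f' (EuclideanSpace.single μ 1) := by
  rw [pderiv3, h.fderiv]

lemma pderiv3_add {f g : E3 → V} {x : E3} (hf : DifferentiableAt ℝ f x)
    (hg : DifferentiableAt ℝ g x) (μ : Fin 3) :
    pderiv3 μ (fun y => f y + g y) x = pderiv3 μ f x + pderiv3 μ g x := by
  rw [(hf.hasFDerivAt.fun_add hg.hasFDerivAt).pderiv3_eq μ]; rfl

lemma pderiv3_const_smul {f : E3 → V} {x : E3} (hf : DifferentiableAt ℝ f x) (c : ℝ)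
    (μ : Fin 3) : pderiv3 μ (fun y => c • f y) x = c • pderiv3 μ f x := by
  rw [(hf.hasFDerivAt.fun_const_smul c).pderiv3_eq μ]; rfl

lemma pderiv3_sum {ι : Type*} (s : Finset ι) {f : ι → E3 → V} {x : E3}
    (hf : ∀ i ∈ s, DifferentiableAt ℝ (f i) x) (μ : Fin 3) :
    pderiv3 μ (fun y => ∑ i ∈ s, f i y) x = ∑ i ∈ s, pderiv3 μ (f i) x := by
  rw [(HasFDerivAt.fun_sum (fun i hi => (hf i hi).hasFDerivAt)).pderiv3_eq μ]
  simp [pderiv3]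

lemma pderiv3_bilin (b : V →L[ℝ] W →L[ℝ] X) {f : E3 → V} {g : E3 → W} {x : E3}
    (hf : DifferentiableAt ℝ f x) (hg : DifferentiableAt ℝ g x) (μ : Fin 3) :
    pderiv3 μ (fun y => b (f y) (g y)) x
      = b (pderiv3 μ f x) (g x) + b (f x) (pderiv3 μ g x) := by
  have h1 : HasFDerivAt (fun y => b (f y)) ((b : V →L[ℝ] W →L[ℝ] X).comp
      (fderiv ℝ f x)) x := b.hasFDerivAt.comp x hf.hasFDerivAt
  have h2 := h1.clm_apply hg.hasFDerivAt
  rw [h2.pderiv3_eq μ]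
  simp [pderiv3, add_comm]

lemma pderiv3_clm_comp (b : V →L[ℝ] W) {f : E3 → V} {x : E3}
    (hf : DifferentiableAt ℝ f x) (μ : Fin 3) :
    pderiv3 μ (fun y => b (f y)) x = b (pderiv3 μ f x) := by
  exact (b.hasFDerivAt.comp x hf.hasFDerivAt).pderiv3_eq μ

lemma contDiff_pderiv3 {f : E3 → V} (hf : ContDiff ℝ (⊤:ℕ∞) f) (μ : Fin 3) :
    ContDiff ℝ (⊤:ℕ∞) (fun y => pderiv3 μ f y) := by
  exact (hf.fderiv_right (le_refl _)).clm_apply contDiff_const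

lemma pderiv3_comm {f : E3 → V} (hf : ContDiff ℝ (⊤:ℕ∞) f) (μ α : Fin 3) (x : E3) :
    pderiv3 μ (fun y => pderiv3 α f y) x = pderiv3 α (fun y => pderiv3 μ f y) x := by
  have hsym : IsSymmSndFDerivAt ℝ f x := by
    refine (hf.contDiffAt).isSymmSndFDerivAt ?_
    simp only [minSmoothness_of_isRCLikeNormedField]; exact WithTop.coe_le_coe.mpr (le_top : (2:ℕ∞) ≤ ⊤)
  have hd : DifferentiableAt ℝ (fderiv ℝ f) x :=
    ((hf.fderiv_right (m := (⊤:ℕ∞)) (le_refl _)).differentiable (by norm_cast)).differentiableAt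
  have key : ∀ ν β : Fin 3, pderiv3 ν (fun y => pderiv3 β f y) x
      = fderiv ℝ (fderiv ℝ f) x (EuclideanSpace.single ν 1) (EuclideanSpace.single β 1) := by
    intro ν β
    have h1 : HasFDerivAt (fun y => (fderiv ℝ f y) (EuclideanSpace.single β 1))
        (((fderiv ℝ f x).comp (0 : E3 →L[ℝ] E3)) +
          (fderiv ℝ (fderiv ℝ f) x).flip (EuclideanSpace.single β 1)) x :=
      hd.hasFDerivAt.clm_apply (hasFDerivAt_const _ _)
    rw [show (fun y => pderiv3 β f y) = fun y => (fderiv ℝ f y) (EuclideanSpace.single β 1) from rfl,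
      h1.pderiv3_eq ν]
    simp
  rw [key μ α, key α μ, hsym]

end





lemma euclid_coord_le_norm (w : E3) (i : Fin 3) : |w i| ≤ ‖w‖ := by
  rw [EuclideanSpace.norm_eq, show |w i| = √(‖w i‖^2) by
    rw [Real.norm_eq_abs, sq_abs, Real.sqrt_sq_eq_abs]]
  exact Real.sqrt_le_sqrt (Finset.single_le_sum (f := fun j => ‖w j‖^2)
    (fun j _ => sq_nonneg _) (Finset.mem_univ i))

open MeasureTheory Set in
theorem integral_div3_eq_zero (G : E3 → Fin 3 → ℝ)
    (hG : ContDiff ℝ (⊤:ℕ∞) G) (hsupp : HasCompactSupport G) :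
    ∫ x : E3, div3 G x = 0 := by
  have hGi : ∀ i : Fin 3, ContDiff ℝ (⊤:ℕ∞) (fun y => G y i) := by
    intro i; exact (contDiff_apply ℝ ℝ i).comp hG
  obtain ⟨R₀, hR₀⟩ := isBounded_iff_forall_norm_le.mp hsupp.isBounded
  set R : ℝ := max R₀ 0 + 1 with hRdef
  have hR : ∀ x ∈ tsupport G, ‖x‖ < R := by
    intro x hx
    have h1 := hR₀ x hx
    have h2 : R₀ ≤ max R₀ 0 := le_max_left _ _
    simp only [hRdef]
    linarith
  set L := (EuclideanSpace.equiv (Fin 3) ℝ).symm with hL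
  set ψ : (Fin 3 → ℝ) → E3 := ⇑L with hψ
  have htrans : ∫ x : E3, div3 G x = ∫ y : Fin 3 → ℝ, div3 G (ψ y) :=
    ((MeasurePreserving.symm _ (EuclideanSpace.volume_preserving_symm_measurableEquiv_toLp (Fin 3))).integral_comp
      (MeasurableEquiv.toLp 2 (Fin 3 → ℝ)).symm.symm.measurableEmbedding (div3 G)).symm
  rw [htrans]
  set a : Fin 3 → ℝ := fun _ => -R with ha
  set b : Fin 3 → ℝ := fun _ => R with hb
  have hRpos : (0:ℝ) < R := by
    have : (0:ℝ) ≤ max R₀ 0 := le_max_right _ _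
    simp only [hRdef]; linarith
  have hab : a ≤ b := fun i => by
    simp only [ha, hb]; have : (0:ℝ) ≤ max R₀ 0 := le_max_right _ _; linarith
  -- membership in box
  have hmem_box : ∀ y : Fin 3 → ℝ, ψ y ∈ tsupport G → y ∈ Icc a b := by
    intro y hy
    have hn := hR _ hy
    refine ⟨fun i => ?_, fun i => ?_⟩ <;>
    · have h := (euclid_coord_le_norm (ψ y) i).trans_lt hn
      have h2 : (ψ y) i = y i := rfl
      rw [h2] at h
      have h3 := abs_le.mp h.le
      simp only [ha, hb]
      first
        | linarith [h3.1]
        | linarith [h3.2]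
  -- vanishing of div outside the support
  have hsupport_div : ∀ x : E3, x ∉ tsupport G → div3 G x = 0 := by
    intro x hx
    have : ∀ i : Fin 3, pderiv3 i (fun z => G z i) x = 0 := by
      intro i
      have hsub : tsupport (fun z => G z i) ⊆ tsupport G :=
        closure_mono (Function.support_subset_iff.mpr (fun z hz => by
          simp only [Function.mem_support] at hz ⊢
          intro h0; exact hz (by rw [h0]; rfl)))
      have h1 : fderiv ℝ (fun z => G z i) x = 0 := by
        by_contra h
        exact hx (hsub (support_fderiv_subset ℝ (Function.mem_support.mpr h)))
      simp [pderiv3, h1]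
    simp [div3, this]
  rw [← setIntegral_eq_integral_of_forall_compl_eq_zero
    (s := Icc a b) (fun y hy => hsupport_div (ψ y) (fun hmem => hy (hmem_box y hmem)))]
  -- apply the divergence theorem
  have hcont_div : Continuous (div3 G) := by
    have : Continuous fun x : E3 => ∑ μ : Fin 3, pderiv3 μ (fun y => G y μ) x := by
      apply continuous_finset_sum
      intro i _
      exact (contDiff_pderiv3 (hGi i) i).continuous
    exact this
  have key := integral_divergence_of_hasFDerivAt_off_countable' a b hab
    (fun i y => G (ψ y) i)
    (fun i y => ((fderiv ℝ (fun z => G z i) (ψ y)).comp (L : (Fin 3 → ℝ) →L[ℝ] E3)))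
    ∅ countable_empty
    (fun i => (((hGi i).continuous).comp L.continuous).continuousOn)
    (fun y _ i => (((hGi i).differentiable (by norm_cast)).differentiableAt.hasFDerivAt).comp
      y L.hasFDerivAt)
    (by
      have heq : (fun y : Fin 3 → ℝ =>
          ∑ i : Fin 3, ((fderiv ℝ (fun z => G z i) (ψ y)).comp
            (L : (Fin 3 → ℝ) →L[ℝ] E3)) (Pi.single i 1))
          = fun y => div3 G (ψ y) := by
        funext y; simp only [ContinuousLinearMap.comp_apply]; rfl
      rw [heq]
      exact (hcont_div.comp L.continuous).continuousOn.integrableOn_compact isCompact_Icc)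
  have hface : ∀ (i : Fin 3) (c : ℝ), |c| = R → ∀ x : Fin 2 → ℝ,
      G (ψ (i.insertNth c x)) i = 0 := by
    intro i c hc x
    have hz : ψ (i.insertNth c x) ∉ tsupport G := by
      intro hmem
      have h1 := hR _ hmem
      have h2 : (ψ (i.insertNth c x)) i = c := by
        have h2a : (ψ (i.insertNth c x)) i = (i.insertNth c x : Fin 3 → ℝ) i := rfl
        rw [h2a, Fin.insertNth_apply_same]
      have h3 := euclid_coord_le_norm (ψ (i.insertNth c x)) i
      rw [h2, hc] at h3
      linarith
    rw [image_eq_zero_of_notMem_tsupport hz]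
    rfl
  rw [show (∫ y in Icc a b, div3 G (ψ y))
      = ∫ y in Icc a b, ∑ i : Fin 3, ((fderiv ℝ (fun z => G z i) (ψ y)).comp
        (L : (Fin 3 → ℝ) →L[ℝ] E3)) (Pi.single i 1) from rfl, key]
  refine Finset.sum_eq_zero fun i _ => ?_
  have h0f := hface i (b i) (by simp only [hb]; exact abs_of_pos hRpos)
  have h0b := hface i (a i) (by simp only [ha]; rw [abs_neg]; exact abs_of_pos hRpos)
  simp only [h0f, h0b, integral_zero, sub_zero]




section Key

variable {𝔤 : Type*} [NormedAddCommGroup 𝔤] [NormedSpace ℝ 𝔤]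


lemma cdiff {V : Type*} [NormedAddCommGroup V] [NormedSpace ℝ V] {f : E3 → V}
    (h : ContDiff ℝ (⊤:ℕ∞) f) : Differentiable ℝ f := h.differentiable (by norm_cast)

lemma sum3_rot {M : Type*} [AddCommMonoid M] (f : Fin 3 → Fin 3 → Fin 3 → M) :
    ∑ x : Fin 3, ∑ y : Fin 3, ∑ z : Fin 3, f x y z
      = ∑ z : Fin 3, ∑ x : Fin 3, ∑ y : Fin 3, f x y z := by
  calc ∑ x : Fin 3, ∑ y : Fin 3, ∑ z : Fin 3, f x y z
      = ∑ x : Fin 3, ∑ z : Fin 3, ∑ y : Fin 3, f x y z :=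
        Finset.sum_congr rfl fun x _ => Finset.sum_comm
    _ = ∑ z : Fin 3, ∑ x : Fin 3, ∑ y : Fin 3, f x y z := Finset.sum_comm

lemma sum_eps_flip {M : Type*} [AddCommGroup M] [Module ℝ M] (ν : Fin 3)
    (h : Fin 3 → Fin 3 → M) :
    (∑ α : Fin 3, ∑ μ : Fin 3, levicivita α μ ν • h μ α)
      = -∑ μ : Fin 3, ∑ σ : Fin 3, levicivita ν μ σ • h μ σ := by
  rw [Finset.sum_comm]
  conv_rhs => rw [← Finset.sum_neg_distrib]
  refine Finset.sum_congr rfl fun μ _ => ?_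
  conv_rhs => rw [← Finset.sum_neg_distrib]
  refine Finset.sum_congr rfl fun σ _ => ?_
  rw [lc_swap13 ν μ σ, neg_smul]


lemma contDiff_bb (br : 𝔤 →L[ℝ] 𝔤 →L[ℝ] 𝔤) {a bb : E3 → Fin 3 → 𝔤}
    (ha : ContDiff ℝ (⊤:ℕ∞) a)
    (hbb : bb = fun y α => curl3 a y α + (1/2:ℝ) • crossBr br (a y) (a y) α)
    (ν : Fin 3) : ContDiff ℝ (⊤:ℕ∞) (fun y => bb y ν) := by
  have hai : ∀ i : Fin 3, ContDiff ℝ (⊤:ℕ∞) (fun y => a y i) :=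
    fun i => (contDiff_apply ℝ 𝔤 i).comp ha
  rw [hbb]
  apply ContDiff.add
  · show ContDiff ℝ (⊤:ℕ∞) fun y =>
      ∑ μ : Fin 3, ∑ σ : Fin 3, levicivita ν μ σ • pderiv3 μ (fun z => a z σ) y
    exact ContDiff.sum fun μ _ => ContDiff.sum fun σ _ =>
      (contDiff_pderiv3 (hai σ) μ).const_smul _
  · show ContDiff ℝ (⊤:ℕ∞) fun y =>
      (1/2:ℝ) • ∑ μ : Fin 3, ∑ σ : Fin 3, levicivita ν μ σ • br (a y μ) (a y σ)
    exact (ContDiff.sum fun μ _ => ContDiff.sum fun σ _ =>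
      (((br.contDiff.comp (hai μ)).clm_apply (hai σ)).const_smul _)).const_smul _

lemma hasDerivAt_slice {V : Type*} [NormedAddCommGroup V] [NormedSpace ℝ V]
    {F : ℝ × E3 → V} (hF : ContDiff ℝ (⊤:ℕ∞) F) (t : ℝ) (x : E3) :
    HasDerivAt (fun s => F (s, x)) (fderiv ℝ F (t, x) (1, 0)) t := by
  have h1 : HasDerivAt (fun s : ℝ => (s, x)) ((1:ℝ), (0:E3)) t :=
    (hasDerivAt_id t).prodMk (hasDerivAt_const t x)
  have h2 : HasFDerivAt F (fderiv ℝ F (t, x)) (t, x) := ((hF.differentiable (by norm_cast)) (t, x)).hasFDerivAt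
  exact h2.comp_hasDerivAt t h1

lemma pderiv3_zero_of_nmem {V : Type*} [NormedAddCommGroup V] [NormedSpace ℝ V]
    {f : E3 → V} {x : E3} (hx : x ∉ tsupport f) (μ : Fin 3) : pderiv3 μ f x = 0 := by
  have h1 : fderiv ℝ f x = 0 := by
    by_contra h
    exact hx (support_fderiv_subset ℝ (Function.mem_support.mpr h))
  simp [pderiv3, h1]

lemma pointwise_key
    (br : 𝔤 →L[ℝ] 𝔤 →L[ℝ] 𝔤)
    (br_alt : ∀ a : 𝔤, br a a = 0)
    (br_jacobi : ∀ a b c : 𝔤, br a (br b c) + br b (br c a) + br c (br a b) = 0)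
    (ipc : 𝔤 →L[ℝ] 𝔤 →L[ℝ] ℝ)
    (ipc_ad : ∀ a b c : 𝔤, ipc (br a b) c = ipc a (br b c))
    (a : E3 → Fin 3 → 𝔤) (q : E3 → 𝔤)
    (ha : ContDiff ℝ (⊤:ℕ∞) a) (hq : ContDiff ℝ (⊤:ℕ∞) q)
    (bb : E3 → Fin 3 → 𝔤)
    (hbb : bb = fun y α => curl3 a y α + (1/2:ℝ) • crossBr br (a y) (a y) α)
    (x : E3) :
    (∑ μ : Fin 3, ipc (curl3 bb x μ + crossBr br (a x) (bb x) μ)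
        (pderiv3 μ q x + br (a x μ) (q x)))
      = div3 (fun y ν => ∑ α : Fin 3, ∑ μ : Fin 3,
          levicivita α ν μ • ipc (bb y μ) (pderiv3 α q y + br (a y α) (q y))) x := by
  classical
  set Cf : E3 → Fin 3 → 𝔤 := fun y α => pderiv3 α q y + br (a y α) (q y) with hCf
  -- smoothness facts
  have hai : ∀ i : Fin 3, ContDiff ℝ (⊤:ℕ∞) (fun y => a y i) :=
    fun i => (contDiff_apply ℝ 𝔤 i).comp ha
  have hCfc : ∀ α : Fin 3, ContDiff ℝ (⊤:ℕ∞) (fun y => Cf y α) := fun α =>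
    (contDiff_pderiv3 hq α).add ((br.contDiff.comp (hai α)).clm_apply hq)
  have hbbc : ∀ ν : Fin 3, ContDiff ℝ (⊤:ℕ∞) (fun y => bb y ν) :=
    fun ν => contDiff_bb br ha hbb ν
  have hterm : ∀ (α ν : Fin 3), ContDiff ℝ (⊤:ℕ∞)
      (fun y => ipc (bb y ν) (Cf y α)) := fun α ν =>
    (ipc.contDiff.comp (hbbc ν)).clm_apply (hCfc α)
  -- step A : expand the divergence
  have stepA : div3 (fun y ν => ∑ α : Fin 3, ∑ μ : Fin 3,
        levicivita α ν μ • ipc (bb y μ) (Cf y α)) x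
      = ∑ d : Fin 3, ∑ α : Fin 3, ∑ ν : Fin 3, levicivita α d ν •
          (ipc (pderiv3 d (fun y => bb y ν) x) (Cf x α)
            + ipc (bb x ν) (pderiv3 d (fun y => Cf y α) x)) := by
    refine Finset.sum_congr rfl fun d _ => ?_
    rw [pderiv3_sum _ (fun α _ => (cdiff (ContDiff.sum fun ν _ =>
      ((hterm α ν).const_smul _))).differentiableAt) d]
    refine Finset.sum_congr rfl fun α _ => ?_
    rw [pderiv3_sum _ (fun ν _ => (cdiff ((hterm α ν).const_smul _)).differentiableAt) d]
    refine Finset.sum_congr rfl fun ν _ => ?_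
    rw [pderiv3_const_smul (cdiff (hterm α ν)).differentiableAt _ d,
      pderiv3_bilin ipc (cdiff (hbbc ν)).differentiableAt (cdiff (hCfc α)).differentiableAt d]
  have hbrsum : ∀ (w : 𝔤) (v : Fin 3 → Fin 3 → 𝔤) (ν : Fin 3),
      br (∑ μ : Fin 3, ∑ σ : Fin 3, levicivita ν μ σ • v μ σ) w
        = ∑ μ : Fin 3, ∑ σ : Fin 3, levicivita ν μ σ • br (v μ σ) w := by
    intro w v ν
    rw [map_sum, ContinuousLinearMap.sum_apply]
    refine Finset.sum_congr rfl fun μ _ => ?_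
    rw [map_sum, ContinuousLinearMap.sum_apply]
    refine Finset.sum_congr rfl fun σ _ => ?_
    rw [_root_.map_smul, ContinuousLinearMap.smul_apply]
  -- step C : the curl part of the divergence
  have stepC : (∑ α : Fin 3, ipc (curl3 bb x α) (Cf x α))
      = ∑ d : Fin 3, ∑ α : Fin 3, ∑ ν : Fin 3, levicivita α d ν •
          ipc (pderiv3 d (fun y => bb y ν) x) (Cf x α) := by
    rw [Finset.sum_comm]
    refine Finset.sum_congr rfl fun α _ => ?_
    rw [show curl3 bb x α = ∑ d : Fin 3, ∑ ν : Fin 3,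
        levicivita α d ν • pderiv3 d (fun y => bb y ν) x from rfl,
      map_sum, ContinuousLinearMap.sum_apply]
    refine Finset.sum_congr rfl fun d _ => ?_
    rw [map_sum, ContinuousLinearMap.sum_apply]
    refine Finset.sum_congr rfl fun ν _ => ?_
    rw [_root_.map_smul, ContinuousLinearMap.smul_apply]
  -- step D : the other part of the divergence
  have stepD : (∑ d : Fin 3, ∑ α : Fin 3, ∑ ν : Fin 3, levicivita α d ν •
        ipc (bb x ν) (pderiv3 d (fun y => Cf y α) x))
      = ∑ ν : Fin 3, ipc (bb x ν)
          (∑ α : Fin 3, ∑ d : Fin 3, levicivita α d ν • pderiv3 d (fun y => Cf y α) x) := by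
    have hR : ∀ ν : Fin 3, ipc (bb x ν)
        (∑ α : Fin 3, ∑ d : Fin 3, levicivita α d ν • pderiv3 d (fun y => Cf y α) x)
        = ∑ α : Fin 3, ∑ d : Fin 3, levicivita α d ν •
            ipc (bb x ν) (pderiv3 d (fun y => Cf y α) x) := by
      intro ν
      rw [map_sum]
      refine Finset.sum_congr rfl fun α _ => ?_
      rw [map_sum]
      refine Finset.sum_congr rfl fun d _ => ?_
      rw [_root_.map_smul]
    simp only [hR]
    rw [sum3_rot (fun d α ν => levicivita α d ν •
      ipc (bb x ν) (pderiv3 d (fun y => Cf y α) x))]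
    exact Finset.sum_congr rfl fun ν _ => Finset.sum_comm
  -- step E : the covariant-curl of the covariant gradient
  have stepE : ∀ ν : Fin 3,
      (∑ α : Fin 3, ∑ d : Fin 3, levicivita α d ν • pderiv3 d (fun y => Cf y α) x)
        + (∑ α : Fin 3, ∑ d : Fin 3, levicivita α d ν • br (a x d) (Cf x α))
      = - br (bb x ν) (q x) := by
    intro ν
    have hterm2 : ∀ α d : Fin 3, pderiv3 d (fun y => Cf y α) x + br (a x d) (Cf x α)
        = pderiv3 d (fun y => pderiv3 α q y) x
          + br (pderiv3 d (fun y => a y α) x) (q x)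
          + (br (a x α) (pderiv3 d q x) + br (a x d) (pderiv3 α q x))
          + br (a x d) (br (a x α) (q x)) := by
      intro α d
      have h1 : pderiv3 d (fun y => Cf y α) x
          = pderiv3 d (fun y => pderiv3 α q y) x
            + (br (pderiv3 d (fun y => a y α) x) (q x) + br (a x α) (pderiv3 d q x)) := by
        rw [show (fun y => Cf y α) = fun y => pderiv3 α q y + br (a y α) (q y) from rfl]
        rw [pderiv3_add (f := fun y => pderiv3 α q y) (g := fun y => br (a y α) (q y))
          (cdiff (contDiff_pderiv3 hq α)).differentiableAt
          (cdiff ((br.contDiff.comp (hai α)).clm_apply hq)).differentiableAt d,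
          pderiv3_bilin br (f := fun y => a y α) (g := q)
          (cdiff (hai α)).differentiableAt (cdiff hq).differentiableAt d]
      have h2 : br (a x d) (Cf x α)
          = br (a x d) (pderiv3 α q x) + br (a x d) (br (a x α) (q x)) := by
        rw [show Cf x α = pderiv3 α q x + br (a x α) (q x) from rfl, map_add]
      rw [h1, h2]
      abel
    have hcomb : (∑ α : Fin 3, ∑ d : Fin 3, levicivita α d ν • pderiv3 d (fun y => Cf y α) x)
          + (∑ α : Fin 3, ∑ d : Fin 3, levicivita α d ν • br (a x d) (Cf x α))
        = (∑ α : Fin 3, ∑ d : Fin 3, levicivita α d ν • pderiv3 d (fun y => pderiv3 α q y) x)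
          + (∑ α : Fin 3, ∑ d : Fin 3, levicivita α d ν • br (pderiv3 d (fun y => a y α) x) (q x))
          + (∑ α : Fin 3, ∑ d : Fin 3, levicivita α d ν •
              (br (a x α) (pderiv3 d q x) + br (a x d) (pderiv3 α q x)))
          + (∑ α : Fin 3, ∑ d : Fin 3, levicivita α d ν • br (a x d) (br (a x α) (q x))) := by
      rw [← Finset.sum_add_distrib, ← Finset.sum_add_distrib, ← Finset.sum_add_distrib,
        ← Finset.sum_add_distrib]
      refine Finset.sum_congr rfl fun α _ => ?_
      rw [← Finset.sum_add_distrib, ← Finset.sum_add_distrib, ← Finset.sum_add_distrib,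
        ← Finset.sum_add_distrib]
      refine Finset.sum_congr rfl fun d _ => ?_
      rw [← smul_add, ← smul_add, ← smul_add, ← smul_add, hterm2 α d]
    rw [hcomb]
    have hP1 : (∑ α : Fin 3, ∑ d : Fin 3, levicivita α d ν •
        pderiv3 d (fun y => pderiv3 α q y) x) = 0 :=
      sum_eps_antisym ν _ (fun α μ => pderiv3_comm hq μ α x)
    have hP34 : (∑ α : Fin 3, ∑ d : Fin 3, levicivita α d ν •
        (br (a x α) (pderiv3 d q x) + br (a x d) (pderiv3 α q x))) = 0 :=
      sum_eps_antisym ν _ (fun α μ => add_comm _ _)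
    have hP2 : (∑ α : Fin 3, ∑ d : Fin 3, levicivita α d ν •
        br (pderiv3 d (fun y => a y α) x) (q x)) = - br (curl3 a x ν) (q x) := by
      rw [sum_eps_flip ν (fun d α => br (pderiv3 d (fun y => a y α) x) (q x))]
      rw [show curl3 a x ν = ∑ μ : Fin 3, ∑ σ : Fin 3,
        levicivita ν μ σ • pderiv3 μ (fun z => a z σ) x from rfl, hbrsum]
    have hP5 : (∑ α : Fin 3, ∑ d : Fin 3, levicivita α d ν •
        br (a x d) (br (a x α) (q x))) = - br ((1/2:ℝ) • crossBr br (a x) (a x) ν) (q x) := by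
      set S := ∑ α : Fin 3, ∑ d : Fin 3, levicivita α d ν •
        br (a x d) (br (a x α) (q x)) with hS
      have hcm := sum_eps_comm ν (fun α d => br (a x d) (br (a x α) (q x)))
      have hX : (∑ α : Fin 3, ∑ d : Fin 3, levicivita α d ν •
          br (a x α) (br (a x d) (q x))) = -S := by
        rw [hS, hcm, neg_neg]
      have hSS : S - (∑ α : Fin 3, ∑ d : Fin 3, levicivita α d ν •
          br (a x α) (br (a x d) (q x)))
          = ∑ α : Fin 3, ∑ d : Fin 3, levicivita α d ν •
              br (br (a x d) (a x α)) (q x) := by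
        rw [hS, ← Finset.sum_sub_distrib]
        refine Finset.sum_congr rfl fun α _ => ?_
        rw [← Finset.sum_sub_distrib]
        refine Finset.sum_congr rfl fun d _ => ?_
        rw [← smul_sub]
        congr 1
        rw [br_leibniz br br_alt br_jacobi (a x d) (a x α) (q x)]
      rw [hX, sub_neg_eq_add] at hSS
      have h2S : S = (1/2:ℝ) • (S + S) := by
        rw [← two_smul ℝ S, smul_smul]
        norm_num
      rw [h2S, hSS]
      rw [sum_eps_flip ν (fun d α => br (br (a x d) (a x α)) (q x))]
      rw [_root_.map_smul, ContinuousLinearMap.smul_apply]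
      rw [show crossBr br (a x) (a x) ν = ∑ μ : Fin 3, ∑ σ : Fin 3,
        levicivita ν μ σ • br (a x μ) (a x σ) from rfl, hbrsum, smul_neg]
    rw [hP1, hP2, hP34, hP5, hbb]
    simp only [map_add, ContinuousLinearMap.add_apply]
    abel
  -- step F : the cross-bracket part of the left side
  have stepF : (∑ μ0 : Fin 3, ipc (crossBr br (a x) (bb x) μ0) (Cf x μ0))
      = ∑ ν : Fin 3, ipc (bb x ν)
          (-(∑ α : Fin 3, ∑ d : Fin 3, levicivita α d ν • br (a x d) (Cf x α))) := by
    have hL : ∀ μ0 : Fin 3, ipc (crossBr br (a x) (bb x) μ0) (Cf x μ0)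
        = ∑ d : Fin 3, ∑ σ : Fin 3, levicivita μ0 d σ •
            (- ipc (bb x σ) (br (a x d) (Cf x μ0))) := by
      intro μ0
      rw [show crossBr br (a x) (bb x) μ0 = ∑ d : Fin 3, ∑ σ : Fin 3,
        levicivita μ0 d σ • br (a x d) (bb x σ) from rfl, map_sum,
        ContinuousLinearMap.sum_apply]
      refine Finset.sum_congr rfl fun d _ => ?_
      rw [map_sum, ContinuousLinearMap.sum_apply]
      refine Finset.sum_congr rfl fun σ _ => ?_
      rw [_root_.map_smul, ContinuousLinearMap.smul_apply]
      congr 1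
      rw [br_skew br br_alt (a x d) (bb x σ), map_neg, ContinuousLinearMap.neg_apply,
        ipc_ad]
    have hR : ∀ ν : Fin 3, ipc (bb x ν)
        (-(∑ α : Fin 3, ∑ d : Fin 3, levicivita α d ν • br (a x d) (Cf x α)))
        = ∑ α : Fin 3, ∑ d : Fin 3, levicivita α d ν •
            (- ipc (bb x ν) (br (a x d) (Cf x α))) := by
      intro ν
      rw [map_neg, map_sum, ← Finset.sum_neg_distrib]
      refine Finset.sum_congr rfl fun α _ => ?_
      rw [map_sum, ← Finset.sum_neg_distrib]
      refine Finset.sum_congr rfl fun d _ => ?_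
      rw [_root_.map_smul, ← smul_neg]
    simp only [hL, hR]
    exact sum3_rot (fun p r s => levicivita p r s • (- ipc (bb x s) (br (a x r) (Cf x p))))
  -- final assembly
  have hsplit : (∑ μ : Fin 3, ipc (curl3 bb x μ + crossBr br (a x) (bb x) μ) (Cf x μ))
      = (∑ μ : Fin 3, ipc (curl3 bb x μ) (Cf x μ))
        + ∑ μ : Fin 3, ipc (crossBr br (a x) (bb x) μ) (Cf x μ) := by
    rw [← Finset.sum_add_distrib]
    exact Finset.sum_congr rfl fun μ _ => by
      rw [map_add ipc (curl3 bb x μ) (crossBr br (a x) (bb x) μ),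
        ContinuousLinearMap.add_apply]
  show (∑ μ : Fin 3, ipc (curl3 bb x μ + crossBr br (a x) (bb x) μ) (Cf x μ))
      = div3 (fun y ν => ∑ α : Fin 3, ∑ μ : Fin 3,
          levicivita α ν μ • ipc (bb y μ) (Cf y α)) x
  rw [hsplit, stepC, stepF, stepA]
  have hregroup : (∑ d : Fin 3, ∑ α : Fin 3, ∑ ν : Fin 3, levicivita α d ν •
        (ipc (pderiv3 d (fun y => bb y ν) x) (Cf x α)
          + ipc (bb x ν) (pderiv3 d (fun y => Cf y α) x)))
      = (∑ d : Fin 3, ∑ α : Fin 3, ∑ ν : Fin 3, levicivita α d ν •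
          ipc (pderiv3 d (fun y => bb y ν) x) (Cf x α))
        + ∑ d : Fin 3, ∑ α : Fin 3, ∑ ν : Fin 3, levicivita α d ν •
            ipc (bb x ν) (pderiv3 d (fun y => Cf y α) x) := by
    simp only [smul_add, Finset.sum_add_distrib]
  rw [hregroup, stepD]
  congr 1
  refine Finset.sum_congr rfl fun ν _ => ?_
  have h0 : ipc (bb x ν) (br (bb x ν) (q x)) = 0 := by
    rw [← ipc_ad, br_alt]
    simp
  have hTν : (∑ α : Fin 3, ∑ d : Fin 3, levicivita α d ν • pderiv3 d (fun y => Cf y α) x)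
      = - br (bb x ν) (q x)
        - ∑ α : Fin 3, ∑ d : Fin 3, levicivita α d ν • br (a x d) (Cf x α) :=
    eq_sub_of_add_eq (stepE ν)
  rw [hTν, map_sub, map_neg, map_neg, h0, neg_zero, zero_sub, ← map_neg]


end Key

end Aux

/-- for smooth solutions of the Yang–Mills evolution on `ℝ³` (temporal
gauge) and an Ad-invariant inner product `ip` on `𝔤`, the weak constraint
`t ↦ ∫ Σ_μ ⟨E(t)(μ), (grad q)(μ) + ⁅A(t)(μ), q⁆⟩` is constant in time, for every smooth
compactly supported `q`. -/

theorem yangMills_weak_constraint_preservation {𝔤 : Type*} [NormedAddCommGroup 𝔤]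
    [NormedSpace ℝ 𝔤] [FiniteDimensional ℝ 𝔤]
    (br : 𝔤 →L[ℝ] 𝔤 →L[ℝ] 𝔤)
    (br_alt : ∀ a : 𝔤, br a a = 0)
    (br_jacobi : ∀ a b c : 𝔤, br a (br b c) + br b (br c a) + br c (br a b) = 0)
    (ip : 𝔤 →ₗ[ℝ] 𝔤 →ₗ[ℝ] ℝ)
    (ip_symm : ∀ a b : 𝔤, ip a b = ip b a)
    (ip_pos : ∀ a : 𝔤, a ≠ 0 → 0 < ip a a)
    (ip_ad : ∀ a b c : 𝔤, ip (br a b) c = ip a (br b c))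
    (A E : ℝ → EuclideanSpace ℝ (Fin 3) → Fin 3 → 𝔤)
    (hA : ContDiff ℝ (⊤ : ℕ∞) (fun p : ℝ × EuclideanSpace ℝ (Fin 3) => A p.1 p.2))
    (hE : ContDiff ℝ (⊤ : ℕ∞) (fun p : ℝ × EuclideanSpace ℝ (Fin 3) => E p.1 p.2))
    (B : ℝ → EuclideanSpace ℝ (Fin 3) → Fin 3 → 𝔤)
    (hB : ∀ t : ℝ, B t = fun y α => curl3 (A t) y α + (1/2 : ℝ) • crossBr br (A t y) (A t y) α)
    (hevolA : ∀ (t : ℝ) (x : EuclideanSpace ℝ (Fin 3)) (μ : Fin 3),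
      deriv (fun s => A s x μ) t = - E t x μ)
    (hevolE : ∀ (t : ℝ) (x : EuclideanSpace ℝ (Fin 3)) (α : Fin 3),
      deriv (fun s => E s x α) t = curl3 (B t) x α + crossBr br (A t x) (B t x) α) :
    ∀ q : EuclideanSpace ℝ (Fin 3) → 𝔤, ContDiff ℝ (⊤ : ℕ∞) q → HasCompactSupport q →
      ∀ t t' : ℝ,
        (∫ x : EuclideanSpace ℝ (Fin 3),
            ∑ μ : Fin 3, ip (E t x μ) (grad3 q x μ + br (A t x μ) (q x)))
          = ∫ x : EuclideanSpace ℝ (Fin 3),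
              ∑ μ : Fin 3, ip (E t' x μ) (grad3 q x μ + br (A t' x μ) (q x)) := by
  intro q hq hqsupp t t'
  classical
  -- continuous bilinear version of `ip`
  let ipL : 𝔤 →ₗ[ℝ] (𝔤 →L[ℝ] ℝ) :=
    { toFun := fun u => LinearMap.toContinuousLinearMap (ip u),
      map_add' := by intro u v; ext w; simp,
      map_smul' := by intro c u; ext w; simp }
  let ipc : 𝔤 →L[ℝ] 𝔤 →L[ℝ] ℝ := LinearMap.toContinuousLinearMap ipL
  have hipc : ∀ u w : 𝔤, ip u w = ipc u w := fun u w => rfl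
  have ipc_ad : ∀ a b c : 𝔤, ipc (br a b) c = ipc a (br b c) := fun a b c => by
    rw [← hipc, ← hipc]; exact ip_ad a b c
  -- slice smoothness
  have hAt : ∀ τ : ℝ, ContDiff ℝ (⊤:ℕ∞) (A τ) :=
    fun τ => hA.comp (ContDiff.prodMk contDiff_const contDiff_id)
  have hEt : ∀ τ : ℝ, ContDiff ℝ (⊤:ℕ∞) (E τ) :=
    fun τ => hE.comp (ContDiff.prodMk contDiff_const contDiff_id)
  have hqx : ∀ y, y ∉ tsupport q → q y = 0 := fun y hy =>
    image_eq_zero_of_notMem_tsupport hy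
  -- time slices have derivatives given by the joint derivative
  have hEsl : ∀ (τ : ℝ) (y : EuclideanSpace ℝ (Fin 3)) (μ : Fin 3),
      HasDerivAt (fun s => E s y μ)
        ((fderiv ℝ (fun p : ℝ × EuclideanSpace ℝ (Fin 3) => E p.1 p.2) (τ, y)) (1, 0) μ) τ :=
    fun τ y μ => (ContinuousLinearMap.proj (R := ℝ) (φ := fun _ : Fin 3 => 𝔤) μ
      ).hasFDerivAt.comp_hasDerivAt τ (hasDerivAt_slice hE τ y)
  have hAsl : ∀ (τ : ℝ) (y : EuclideanSpace ℝ (Fin 3)) (μ : Fin 3),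
      HasDerivAt (fun s => A s y μ)
        ((fderiv ℝ (fun p : ℝ × EuclideanSpace ℝ (Fin 3) => A p.1 p.2) (τ, y)) (1, 0) μ) τ :=
    fun τ y μ => (ContinuousLinearMap.proj (R := ℝ) (φ := fun _ : Fin 3 => 𝔤) μ
      ).hasFDerivAt.comp_hasDerivAt τ (hasDerivAt_slice hA τ y)
  -- the integrand and its pointwise time derivative
  set Fi : ℝ → EuclideanSpace ℝ (Fin 3) → ℝ := fun τ y =>
    ∑ μ : Fin 3, ip (E τ y μ) (grad3 q y μ + br (A τ y μ) (q y)) with hFi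
  set F' : ℝ → EuclideanSpace ℝ (Fin 3) → ℝ := fun τ y =>
    ∑ μ : Fin 3,
      (ipc ((fderiv ℝ (fun p : ℝ × EuclideanSpace ℝ (Fin 3) => E p.1 p.2) (τ, y)) (1, 0) μ)
          (grad3 q y μ + br (A τ y μ) (q y))
        + ipc (E τ y μ)
            (br ((fderiv ℝ (fun p : ℝ × EuclideanSpace ℝ (Fin 3) => A p.1 p.2) (τ, y)) (1, 0) μ)
              (q y))) with hF'
  -- time differentiability of the integrand, pointwise in y
  have hdF : ∀ (τ : ℝ) (y : EuclideanSpace ℝ (Fin 3)),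
      HasDerivAt (fun s => Fi s y) (F' τ y) τ := by
    intro τ y
    simp only [hFi, hF', hipc]
    refine HasDerivAt.fun_sum fun μ _ => ?_
    have h1 : HasDerivAt (fun s => ipc (E s y μ))
        (ipc ((fderiv ℝ (fun p : ℝ × EuclideanSpace ℝ (Fin 3) => E p.1 p.2) (τ, y)) (1, 0) μ)) τ :=
      ipc.hasFDerivAt.comp_hasDerivAt τ (hEsl τ y μ)
    have h3 : HasDerivAt (fun s => (br.flip (q y)) (A s y μ))
        ((br.flip (q y))
          ((fderiv ℝ (fun p : ℝ × EuclideanSpace ℝ (Fin 3) => A p.1 p.2) (τ, y)) (1, 0) μ)) τ :=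
      (br.flip (q y)).hasFDerivAt.comp_hasDerivAt τ (hAsl τ y μ)
    have h2 : HasDerivAt (fun s => grad3 q y μ + br (A s y μ) (q y))
        (br ((fderiv ℝ (fun p : ℝ × EuclideanSpace ℝ (Fin 3) => A p.1 p.2) (τ, y)) (1, 0) μ)
          (q y)) τ := h3.const_add (grad3 q y μ)
    exact h1.clm_apply h2
  -- vanishing off the support of q
  have hCzero : ∀ (τ : ℝ) (y : EuclideanSpace ℝ (Fin 3)), y ∉ tsupport q → ∀ μ : Fin 3,
      grad3 q y μ + br (A τ y μ) (q y) = 0 := by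
    intro τ y hy μ
    rw [hqx y hy, _root_.map_zero,
      show grad3 q y μ = pderiv3 μ q y from rfl, pderiv3_zero_of_nmem hy μ, add_zero]
  have hFizero : ∀ (τ : ℝ) (y : EuclideanSpace ℝ (Fin 3)), y ∉ tsupport q → Fi τ y = 0 := by
    intro τ y hy
    simp only [hFi]
    exact Finset.sum_eq_zero fun μ _ => by rw [hCzero τ y hy μ, _root_.map_zero]
  have hF'zero : ∀ (τ : ℝ) (y : EuclideanSpace ℝ (Fin 3)), y ∉ tsupport q → F' τ y = 0 := by
    intro τ y hy
    simp only [hF']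
    refine Finset.sum_eq_zero fun μ _ => ?_
    rw [hCzero τ y hy μ, _root_.map_zero, hqx y hy, _root_.map_zero, _root_.map_zero, add_zero]
  -- joint smoothness of F'
  have hF'j : ContDiff ℝ (⊤:ℕ∞) (fun p : ℝ × EuclideanSpace ℝ (Fin 3) => F' p.1 p.2) := by
    simp only [hF']
    refine ContDiff.sum fun μ _ => ContDiff.add ?_ ?_
    · refine (ipc.contDiff.comp ((contDiff_apply ℝ 𝔤 μ).comp
        (((hE.fderiv_right (le_refl _))).clm_apply contDiff_const))).clm_apply ?_
      exact (((contDiff_pderiv3 hq μ).comp contDiff_snd)).add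
        ((br.contDiff.comp ((contDiff_apply ℝ 𝔤 μ).comp hA)).clm_apply (hq.comp contDiff_snd))
    · exact (ipc.contDiff.comp ((contDiff_apply ℝ 𝔤 μ).comp hE)).clm_apply
        ((br.contDiff.comp ((contDiff_apply ℝ 𝔤 μ).comp
          (((hA.fderiv_right (le_refl _))).clm_apply contDiff_const))).clm_apply
          (hq.comp contDiff_snd))
  -- continuity of each time slice of Fi
  have hFit : ∀ τ : ℝ, Continuous (Fi τ) := by
    intro τ
    have : ContDiff ℝ (⊤:ℕ∞) (Fi τ) := by
      simp only [hFi, hipc]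
      exact ContDiff.sum fun μ _ =>
        (ipc.contDiff.comp ((contDiff_apply ℝ 𝔤 μ).comp (hEt τ))).clm_apply
          ((contDiff_pderiv3 hq μ).add
            ((br.contDiff.comp ((contDiff_apply ℝ 𝔤 μ).comp (hAt τ))).clm_apply hq))
    exact this.continuous
  -- the derivative of the integral vanishes
  have key : ∀ τ0 : ℝ, HasDerivAt (fun τ => ∫ y : EuclideanSpace ℝ (Fin 3), Fi τ y) 0 τ0 := by
    intro τ0
    obtain ⟨M, hM⟩ := ((isCompact_Icc (a := τ0 - 1) (b := τ0 + 1)).prod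
      hqsupp.isCompact).exists_bound_of_continuousOn
      (hF'j.continuous.continuousOn
        (f := fun p : ℝ × EuclideanSpace ℝ (Fin 3) => F' p.1 p.2))
    have hmain := hasDerivAt_integral_of_dominated_loc_of_deriv_le
      (μ := MeasureTheory.volume) (F := Fi) (F' := F') (x₀ := τ0)
      (bound := (tsupport q).indicator fun _ => M) (Metric.ball_mem_nhds τ0 one_pos)
      (Filter.Eventually.of_forall fun τ => (hFit τ).aestronglyMeasurable)
      (((hFit τ0).integrable_of_hasCompactSupport
        (HasCompactSupport.intro hqsupp.isCompact (fun y hy => hFizero τ0 y hy))))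
      ((hF'j.continuous.comp (Continuous.prodMk continuous_const continuous_id)
        ).aestronglyMeasurable)
      (MeasureTheory.ae_of_all _ (fun y τ hτ => by
        by_cases hy : y ∈ tsupport q
        · rw [Set.indicator_of_mem hy]
          refine hM (τ, y) ⟨?_, hy⟩
          have := Metric.mem_ball.mp hτ
          rw [Real.dist_eq, abs_sub_lt_iff] at this
          exact ⟨by linarith [this.1, this.2], by linarith [this.1, this.2]⟩
        · rw [Set.indicator_of_notMem hy, hF'zero τ y hy, norm_zero]))
      (by
        rw [MeasureTheory.integrable_indicator_iff (isClosed_tsupport q).measurableSet]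
        exact MeasureTheory.integrableOn_const
          (hqsupp.isCompact.measure_lt_top.ne))
      (MeasureTheory.ae_of_all _ (fun y τ _ => hdF τ y))
    -- the integral of F' τ0 vanishes
    have hkey := pointwise_key br br_alt br_jacobi ipc ipc_ad (A τ0) q (hAt τ0) hq
      (B τ0) (hB τ0)
    have hzero : (∫ y : EuclideanSpace ℝ (Fin 3), F' τ0 y) = 0 := by
      have hdEt : ∀ (y : EuclideanSpace ℝ (Fin 3)) (μ : Fin 3),
          (fderiv ℝ (fun p : ℝ × EuclideanSpace ℝ (Fin 3) => E p.1 p.2) (τ0, y)) (1, 0) μ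
            = curl3 (B τ0) y μ + crossBr br (A τ0 y) (B τ0 y) μ :=
        fun y μ => ((hEsl τ0 y μ).deriv).symm.trans (hevolE τ0 y μ)
      have hdAt : ∀ (y : EuclideanSpace ℝ (Fin 3)) (μ : Fin 3),
          (fderiv ℝ (fun p : ℝ × EuclideanSpace ℝ (Fin 3) => A p.1 p.2) (τ0, y)) (1, 0) μ
            = - E τ0 y μ :=
        fun y μ => ((hAsl τ0 y μ).deriv).symm.trans (hevolA τ0 y μ)
      have hsecond : ∀ (y : EuclideanSpace ℝ (Fin 3)) (μ : Fin 3),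
          ipc (E τ0 y μ) (br (- E τ0 y μ) (q y)) = 0 := by
        intro y μ
        rw [map_neg, ContinuousLinearMap.neg_apply, map_neg, ← hipc, ← ip_ad, br_alt]
        simp
      have hptw : ∀ y : EuclideanSpace ℝ (Fin 3), F' τ0 y
          = div3 (fun y ν => ∑ α : Fin 3, ∑ μ : Fin 3,
              levicivita α ν μ • ipc (B τ0 y μ)
                (pderiv3 α q y + br (A τ0 y α) (q y))) y := by
        intro y
        simp only [hF', hdEt, hdAt, hsecond, add_zero]
        exact hkey y
      rw [show (∫ y : EuclideanSpace ℝ (Fin 3), F' τ0 y)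
          = ∫ y : EuclideanSpace ℝ (Fin 3), div3 (fun y ν => ∑ α : Fin 3, ∑ μ : Fin 3,
              levicivita α ν μ • ipc (B τ0 y μ)
                (pderiv3 α q y + br (A τ0 y α) (q y))) y from by
        congr 1; exact funext hptw]
      refine integral_div3_eq_zero _ ?_ ?_
      · refine contDiff_pi.mpr fun ν => ContDiff.sum fun α _ => ContDiff.sum fun μ _ => ?_
        exact ((ipc.contDiff.comp (contDiff_bb br (hAt τ0) (hB τ0) μ)).clm_apply
          ((contDiff_pderiv3 hq α).add
            ((br.contDiff.comp ((contDiff_apply ℝ 𝔤 α).comp (hAt τ0))).clm_apply hq)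
            )).const_smul _
      · refine HasCompactSupport.intro hqsupp.isCompact fun y hy => ?_
        funext ν
        refine Finset.sum_eq_zero fun α _ => Finset.sum_eq_zero fun μ _ => ?_
        have h0 : pderiv3 α q y + br (A τ0 y α) (q y) = 0 := hCzero τ0 y hy α
        rw [h0, _root_.map_zero, smul_zero]
    rw [← hzero]
    exact hmain.2
  have hconst := is_const_of_deriv_eq_zero
    (fun τ => (key τ).differentiableAt) (fun τ => (key τ).deriv) t t'
  exact hconst
end

section
/- Let V and Y be real inner product spaces, C : V → Y a linear map, β : V × V → Y a symmetric bilinear map, δt > 0 a real number and θ ∈ [1/2, 1]. Let A⁰, A¹, E⁰, E¹ ∈ V, set Bⁱ := C(Aⁱ) + (1/2)β(Aⁱ, Aⁱ) for i = 0, 1, and write Z^θ := θ•Z¹ + (1−θ)•Z⁰ for Z ∈ {A, E, B}. Assume: (i) A¹ − A⁰ = −δt • E^θ; (ii) for all v ∈ V, ⟪E¹ − E⁰, v⟫_V = δt • ⟪B^θ, C(v) + β((1/2)•(A⁰ + A¹), v)⟫_Y. Then (1/2)‖E¹‖² + (1/2)‖B¹‖² ≤ (1/2)‖E⁰‖² +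 (1/2)‖B⁰‖², with equality when θ = 1/2. (This is the energy decay/conservation of the θ-scheme for the unconstrained discrete Yang–Mills system.) -/
open scoped RealInnerProductSpace

private lemma pol_aux {H : Type*} [NormedAddCommGroup H] [InnerProductSpace ℝ H]
    (a b m : H) (c : ℝ) (hm : a + b = (2:ℝ) • m + c • (a - b)) :
    ‖a‖ ^ 2 - ‖b‖ ^ 2 = 2 * ⟪a - b, m⟫ + c * ‖a - b‖ ^ 2 := by
  have h : ‖a‖ ^ 2 - ‖b‖ ^ 2 = ⟪a - b, a + b⟫ := by
    rw [← real_inner_self_eq_norm_sq, ← real_inner_self_eq_norm_sq]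
    rw [inner_sub_left, inner_add_right, inner_add_right, real_inner_comm b a]
    ring
  rw [h, hm, inner_add_right, real_inner_smul_right, real_inner_smul_right,
    real_inner_self_eq_norm_sq]

/-- energy decay of the one-step θ-scheme for the unconstrained discrete
Yang–Mills system, with conservation (equality) when `θ = 1/2`. -/
theorem theta_scheme_energy_decay {V Y : Type*}
    [NormedAddCommGroup V] [InnerProductSpace ℝ V]
    [NormedAddCommGroup Y] [InnerProductSpace ℝ Y]
    (C : V →ₗ[ℝ] Y) (β : V →ₗ[ℝ] V →ₗ[ℝ] Y)
    (βsymm : ∀ x y : V, β x y = β y x)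
    (δt : ℝ) (hδt : 0 < δt) (θ : ℝ) (hθ₁ : 1/2 ≤ θ) (hθ₂ : θ ≤ 1)
    (A₀ A₁ E₀ E₁ : V) (B₀ B₁ : Y)
    (hB₀ : B₀ = C A₀ + (1/2 : ℝ) • β A₀ A₀)
    (hB₁ : B₁ = C A₁ + (1/2 : ℝ) • β A₁ A₁)
    (hevolA : A₁ - A₀ = -(δt • (θ • E₁ + (1 - θ) • E₀)))
    (hevolE : ∀ v : V, ⟪E₁ - E₀, v⟫
      = δt * ⟪θ • B₁ + (1 - θ) • B₀, C v + β ((1/2 : ℝ) • (A₀ + A₁)) v⟫) :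
    (1/2) * ‖E₁‖ ^ 2 + (1/2) * ‖B₁‖ ^ 2 ≤ (1/2) * ‖E₀‖ ^ 2 + (1/2) * ‖B₀‖ ^ 2
      ∧ (θ = 1/2 →
        (1/2) * ‖E₁‖ ^ 2 + (1/2) * ‖B₁‖ ^ 2 = (1/2) * ‖E₀‖ ^ 2 + (1/2) * ‖B₀‖ ^ 2) := by
  set Eθ : V := θ • E₁ + (1 - θ) • E₀ with hEθ
  set Bθ : Y := θ • B₁ + (1 - θ) • B₀ with hBθ
  have h1 : β A₀ A₁ = β A₁ A₀ := βsymm _ _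
  have hBdiff : B₁ - B₀ = C (A₁ - A₀) + β ((1/2 : ℝ) • (A₀ + A₁)) (A₁ - A₀) := by
    rw [hB₀, hB₁]
    simp only [map_add, map_sub, map_smul, LinearMap.add_apply, LinearMap.sub_apply,
      LinearMap.smul_apply]
    rw [h1]
    module
  have hBdiff' : B₁ - B₀ = -(δt • (C Eθ + β ((1/2 : ℝ) • (A₀ + A₁)) Eθ)) := by
    rw [hBdiff, hevolA]
    simp only [map_neg, map_smul, LinearMap.neg_apply, LinearMap.smul_apply]
    module
  have hE : ⟪E₁ - E₀, Eθ⟫ = δt * ⟪Bθ, C Eθ + β ((1/2 : ℝ) • (A₀ + A₁)) Eθ⟫ := hevolE Eθ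
  have hB : ⟪B₁ - B₀, Bθ⟫ = -(δt * ⟪Bθ, C Eθ + β ((1/2 : ℝ) • (A₀ + A₁)) Eθ⟫) := by
    rw [hBdiff', inner_neg_left, real_inner_smul_left,
      real_inner_comm (C Eθ + β ((1/2 : ℝ) • (A₀ + A₁)) Eθ) Bθ]
  have polE : ‖E₁‖ ^ 2 - ‖E₀‖ ^ 2 = 2 * ⟪E₁ - E₀, Eθ⟫ + (1 - 2*θ) * ‖E₁ - E₀‖ ^ 2 := by
    apply pol_aux
    rw [hEθ]; module
  have polB : ‖B₁‖ ^ 2 - ‖B₀‖ ^ 2 = 2 * ⟪B₁ - B₀, Bθ⟫ + (1 - 2*θ) * ‖B₁ - B₀‖ ^ 2 := by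
    apply pol_aux
    rw [hBθ]; module
  have key : (1/2) * ‖E₁‖ ^ 2 + (1/2) * ‖B₁‖ ^ 2 - ((1/2) * ‖E₀‖ ^ 2 + (1/2) * ‖B₀‖ ^ 2)
      = ((1 - 2*θ)/2) * (‖E₁ - E₀‖ ^ 2 + ‖B₁ - B₀‖ ^ 2) := by
    have := polE
    have := polB
    rw [hE] at polE
    rw [hB] at polB
    linarith
  constructor
  · nlinarith [sq_nonneg ‖E₁ - E₀‖, sq_nonneg ‖B₁ - B₀‖, key]
  · intro hhalf
    rw [hhalf] at key
    norm_num at key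
    linarith
end

section
/- Let V and W be real inner product spaces, G : W → V a linear map, and T : V × V × W → ℝ a trilinear map satisfying T(x, x, q) = 0 for all x ∈ V and q ∈ W. Let θ ∈ ℝ, let (δtⁿ)_{n∈ℕ} be positive reals, and let (Aⁿ)_{n∈ℕ}, (Eⁿ)_{n∈ℕ} be sequences in V such that for every n: (i) Aⁿ⁺¹ − Aⁿ = −δtⁿ • (θ•Eⁿ⁺¹ + (1−θ)•Eⁿ); (ii) for all q ∈ W, ⟪Eⁿ⁺¹ − Eⁿ, G(q)⟫_V + T(Eⁿ⁺¹ − Eⁿ, (1−θ)•Aⁿ⁺¹ + θ•Aⁿ, q) = 0. Define the constraint functional 𝔠ⁿ(q) := ⟪Eⁿ, G(q)⟫_V + T(Eⁿ, Aⁿ, q). Then 𝔠ⁿ(q) = 𝔠⁰(q) for every n ∈ ℕ and every q ∈ W. (This is the exact constraint preservation of the constrained θ-scheme for the Yang–Mills equations.) -/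
open scoped RealInnerProductSpace

/-- exact constraint preservation of the constrained θ-scheme for the
Yang–Mills equations: the constraint functional
`𝔠ⁿ(q) = ⟪Eⁿ, G(q)⟫ + T(Eⁿ, Aⁿ, q)` is independent of `n`. -/
theorem theta_scheme_constraint_preservation {V W : Type*}
    [NormedAddCommGroup V] [InnerProductSpace ℝ V]
    [NormedAddCommGroup W] [InnerProductSpace ℝ W]
    (G : W →ₗ[ℝ] V) (T : V →ₗ[ℝ] V →ₗ[ℝ] W →ₗ[ℝ] ℝ)
    (Talt : ∀ (x : V) (q : W), T x x q = 0)
    (θ : ℝ) (δt : ℕ → ℝ) (hδt : ∀ n, 0 < δt n)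
    (A E : ℕ → V)
    (hevolA : ∀ n : ℕ, A (n + 1) - A n = -(δt n • (θ • E (n + 1) + (1 - θ) • E n)))
    (hevolE : ∀ (n : ℕ) (q : W),
      ⟪E (n + 1) - E n, G q⟫
        + T (E (n + 1) - E n) ((1 - θ) • A (n + 1) + θ • A n) q = 0) :
    ∀ (n : ℕ) (q : W),
      ⟪E n, G q⟫ + T (E n) (A n) q = ⟪E 0, G q⟫ + T (E 0) (A 0) q := by
  intro n q
  induction n with
  | zero => rfl
  | succ n ih =>
    have h1 := hevolE n q
    have hskew : ∀ x y : V, T x y q + T y x q = 0 := by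
      intro x y
      have h := Talt (x + y) q
      simpa [map_add, Talt, add_comm] using h
    have h2 : T (θ • E (n + 1) + (1 - θ) • E n) (A (n + 1) - A n) q = 0 := by
      rw [hevolA n]
      simp only [map_smul, map_add, map_neg, LinearMap.smul_apply, LinearMap.add_apply,
        LinearMap.neg_apply, smul_eq_mul, Talt]
      linear_combination (-(θ * (δt n * (1 - θ)))) * hskew (E (n + 1)) (E n)
    simp only [map_sub, map_add, map_smul, LinearMap.sub_apply, LinearMap.add_apply,
      LinearMap.smul_apply, smul_eq_mul, inner_sub_left] at h1 h2
    rw [← ih]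
    linarith [h1, h2]
end

section
/- Let V, W, Y be real inner product spaces, G : W → V and C : V → Y linear maps, β : V × V → Y a symmetric bilinear map, and T : V × V × W → ℝ a trilinear map with T(x, x, q) = 0 for all x ∈ V, q ∈ W. Let δt > 0, A⁰, A¹, E⁰, E¹ ∈ V, λ ∈ W, and set Bⁱ := C(Aⁱ) + (1/2)β(Aⁱ, Aⁱ) for i = 0, 1. Assume: (i) A¹ − A⁰ = −δt • E¹ (implicit Euler, θ = 1); (ii) for all v ∈ V, ⟪E¹ − E⁰, v⟫_V + δt•(⟪G(λ), v⟫_V + T(v, A¹, λ)) = δt • ⟪B¹, C(v) + β((1/2)•(A⁰ + A¹), v)⟫_Y; (iii) for all q ∈ W, ⟪E¹ − E⁰, G(q)⟫_V + T(E¹ − E⁰, A⁰, q) = 0; (iv) the initial constraint vanishes: ⟪E⁰, G(q)⟫_V + T(E⁰, A⁰, q) = 0 for all q ∈ W. Then (1/2)‖E¹‖² + (1/2)‖B¹‖² ≤ (1/2)‖E⁰‖² + (1/2)‖B⁰‖². (This is the energy dissipation of the constrained implicit Euler scheme for the Yang–Mills equations.) -/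
open scoped RealInnerProductSpace

/-- energy dissipation of the constrained implicit Euler (θ = 1) scheme
for the Yang–Mills equations, assuming a vanishing initial constraint. -/
theorem constrained_implicit_euler_energy_dissipation {V W Y : Type*}
    [NormedAddCommGroup V] [InnerProductSpace ℝ V]
    [NormedAddCommGroup W] [InnerProductSpace ℝ W]
    [NormedAddCommGroup Y] [InnerProductSpace ℝ Y]
    (G : W →ₗ[ℝ] V) (C : V →ₗ[ℝ] Y) (β : V →ₗ[ℝ] V →ₗ[ℝ] Y)
    (βsymm : ∀ x y : V, β x y = β y x)
    (T : V →ₗ[ℝ] V →ₗ[ℝ] W →ₗ[ℝ] ℝ)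
    (Talt : ∀ (x : V) (q : W), T x x q = 0)
    (δt : ℝ) (hδt : 0 < δt)
    (A₀ A₁ E₀ E₁ : V) (lam : W) (B₀ B₁ : Y)
    (hB₀ : B₀ = C A₀ + (1/2 : ℝ) • β A₀ A₀)
    (hB₁ : B₁ = C A₁ + (1/2 : ℝ) • β A₁ A₁)
    (hevolA : A₁ - A₀ = -(δt • E₁))
    (hevolE : ∀ v : V,
      ⟪E₁ - E₀, v⟫ + δt * (⟪G lam, v⟫ + T v A₁ lam)
        = δt * ⟪B₁, C v + β ((1/2 : ℝ) • (A₀ + A₁)) v⟫)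
    (hconstr : ∀ q : W, ⟪E₁ - E₀, G q⟫ + T (E₁ - E₀) A₀ q = 0)
    (hinit : ∀ q : W, ⟪E₀, G q⟫ + T E₀ A₀ q = 0) :
    (1/2) * ‖E₁‖ ^ 2 + (1/2) * ‖B₁‖ ^ 2 ≤ (1/2) * ‖E₀‖ ^ 2 + (1/2) * ‖B₀‖ ^ 2 := by
  have hA : A₁ = A₀ - δt • E₁ := by
    have h := hevolA
    rw [sub_eq_iff_eq_add] at h
    rw [h]; abel
  -- constraint at step 1
  have hc1 : ⟪E₁, G lam⟫ + T E₁ A₀ lam = 0 := by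
    have h1 := hconstr lam
    have h2 := hinit lam
    rw [inner_sub_left] at h1
    simp only [map_sub, LinearMap.sub_apply] at h1
    linarith
  have hT1 : (T E₁ A₁ lam : ℝ) = T E₁ A₀ lam := by
    rw [hA]
    simp [map_sub, map_smul, Talt]
  -- B difference
  have hB : B₁ - B₀ = -(δt • (C E₁ + β ((1/2 : ℝ) • (A₀ + A₁)) E₁)) := by
    rw [hB₀, hB₁, hA]
    simp only [map_sub, map_smul, map_add, LinearMap.sub_apply, LinearMap.smul_apply,
      LinearMap.add_apply, βsymm E₁ A₀]
    module
  have key : ⟪E₁ - E₀, E₁⟫ = δt * ⟪B₁, C E₁ + (β ((1/2 : ℝ) • (A₀ + A₁))) E₁⟫ := by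
    have h := hevolE E₁
    have hcomm : ⟪G lam, E₁⟫ = ⟪E₁, G lam⟫ := real_inner_comm _ _
    linear_combination h - δt * hcomm - δt * hT1 - δt * hc1
  have hBinner : ⟪B₁ - B₀, B₁⟫ = -(δt * ⟪B₁, C E₁ + β ((1/2 : ℝ) • (A₀ + A₁)) E₁⟫) := by
    rw [hB, inner_neg_left, real_inner_smul_left, real_inner_comm]
  have hsum : ⟪E₁ - E₀, E₁⟫ + ⟪B₁ - B₀, B₁⟫ = 0 := by
    rw [hBinner, key]; ring
  have hE : ⟪E₁ - E₀, E₁⟫ = ‖E₁‖ ^ 2 - ⟪E₀, E₁⟫ := by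
    rw [inner_sub_left, real_inner_self_eq_norm_sq]
  have hBe : ⟪B₁ - B₀, B₁⟫ = ‖B₁‖ ^ 2 - ⟪B₀, B₁⟫ := by
    rw [inner_sub_left, real_inner_self_eq_norm_sq]
  have hEn : ‖E₁ - E₀‖ ^ 2 = ‖E₁‖ ^ 2 - 2 * ⟪E₁, E₀⟫ + ‖E₀‖ ^ 2 := norm_sub_sq_real E₁ E₀
  have hBn : ‖B₁ - B₀‖ ^ 2 = ‖B₁‖ ^ 2 - 2 * ⟪B₁, B₀⟫ + ‖B₀‖ ^ 2 := norm_sub_sq_real B₁ B₀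
  have hcE : ⟪E₀, E₁⟫ = ⟪E₁, E₀⟫ := real_inner_comm _ _
  have hcB : ⟪B₀, B₁⟫ = ⟪B₁, B₀⟫ := real_inner_comm _ _
  nlinarith [sq_nonneg ‖E₁ - E₀‖, sq_nonneg ‖B₁ - B₀‖]
end
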